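/- (Punctual apolar scheme in the affine chart) Assume char K = 0 and K algebraically closed, and let N_d = C(n+k,k) + C(n+k+1,k+1) if d = 2k+2 is even and N_d = 2·C(n+k,k) if d = 2k+1 is odd. Then for every nonzero f ∈ R_𝐝 there exists an ideal J of the polynomial ring K[z_{i,j} : 1 ≤ j ≤ s, 1 ≤ i ≤ n_j] in n variables such that the quotient K[z_{i,j}]/J is a local finite-dimensional K-algebra of dimension at most N_d, and the homogenization of J with respect to the variable z_0 is contained in the apolar ideal (u(f))^⊥. In other words, u(f) admits an apolar zero-dimensional scheme of length at most N_d that is punctual (supported at a single point) and contained in the affine chart {z_0 ≠ 0} of P^n. -/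

import Mathlib

open MvPolynomial

/-- Variables of `R`: `x_{i,j}` for `j : Fin s`, `i : Fin (n j + 1)` (index `0` is `x_{0,j}`). -/
abbrev RVar (s : ℕ) (n : Fin s → ℕ) := Σ j : Fin s, Fin (n j + 1)

/-- Variables of `S`: `none` is `z_0`, `some ⟨j,i⟩` is `z_{i+1,j}`. -/
abbrev SVar (s : ℕ) (n : Fin s → ℕ) := Option (Σ j : Fin s, Fin (n j))

/-- `f` is multihomogeneous of multidegree `d`. -/
def MultiHomog {K : Type*} [CommSemiring K] {s : ℕ} {n : Fin s → ℕ} (d : Fin s → ℕ)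
    (f : MvPolynomial (RVar s n) K) : Prop :=
  ∀ m ∈ f.support, ∀ j : Fin s, ∑ i : Fin (n j + 1), m ⟨j, i⟩ = d j

/-- The substitution `u : R → S`, `x_{0,j} ↦ z_0`, `x_{i,j} ↦ z_{i,j}` for `i ≥ 1`. -/
noncomputable def subst (K : Type*) [CommSemiring K] (s : ℕ) (n : Fin s → ℕ) :
    MvPolynomial (RVar s n) K →ₐ[K] MvPolynomial (SVar s n) K :=
  aeval fun v => if h : (v.2 : ℕ) = 0 then X none
    else X (some ⟨v.1, ⟨(v.2 : ℕ) - 1, by have := v.2.isLt; omega⟩⟩)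


/-- The action of `g` as a constant-coefficient differential operator on `p`: the
polynomial `g(∂) p`, defined bilinearly from the rule
`∂^μ z^ν = (∏ᵢ νᵢ(νᵢ-1)⋯(νᵢ-μᵢ+1)) z^(ν-μ)` (and `= 0` unless `μ ≤ ν`).
Thus `g` belongs to the apolar ideal `p^⊥` iff `diffOp g p = 0`. -/
noncomputable def diffOp {K : Type*} [CommSemiring K] {σ : Type*} [DecidableEq σ]
    (g p : MvPolynomial σ K) : MvPolynomial σ K :=
  ∑ μ ∈ g.support, ∑ ν ∈ p.support,
    if μ ≤ ν then
      monomial (ν - μ)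
        (coeff μ g * coeff ν p *
          ((∏ i ∈ μ.support, (ν i).descFactorial (μ i) : ℕ) : K))
    else 0

/-- An ideal of `MvPolynomial σ K` is homogeneous (w.r.t. total degree):
it contains all homogeneous components of its elements. -/
def IsHomogIdeal {K : Type*} [CommSemiring K] {σ : Type*}
    (I : Ideal (MvPolynomial σ K)) : Prop :=
  ∀ f ∈ I, ∀ k : ℕ, homogeneousComponent k f ∈ I

/-- An ideal of `MvPolynomial σ K` is saturated with respect to the irrelevant
maximal ideal `(X v : v)`. -/
def IsSatIdeal {K : Type*} [CommSemiring K] {σ : Type*}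
    (I : Ideal (MvPolynomial σ K)) : Prop :=
  ∀ f : MvPolynomial σ K, (∀ v : σ, X v * f ∈ I) → f ∈ I

/-- `dim_K (S/I)_t`, the dimension of the degree-`t` homogeneous component of `S/I`,
computed as `dim (S_t / (I ∩ S_t))`. -/
noncomputable def quotDim (K : Type*) [Field K] {σ : Type*}
    (I : Ideal (MvPolynomial σ K)) (t : ℕ) : ℕ :=
  Module.finrank K
    (↥(homogeneousSubmodule σ K t) ⧸
      Submodule.comap (homogeneousSubmodule σ K t).subtype (Submodule.restrictScalars K I))

/-- Homogenization of a polynomial in the variables `z_{i,j}` with respect to the extra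
variable `z_0 = X none`: each monomial `z^ν` is multiplied by `z_0^(deg q - deg ν)`. -/
noncomputable def homogenize {K : Type*} [CommSemiring K] {s : ℕ} {n : Fin s → ℕ}
    (q : MvPolynomial (Σ j : Fin s, Fin (n j)) K) : MvPolynomial (SVar s n) K :=
  ∑ ν ∈ q.support,
    monomial
      (Finsupp.mapDomain (some : (Σ j : Fin s, Fin (n j)) → SVar s n) ν +
        Finsupp.single (none : SVar s n) (q.totalDegree - ν.sum fun _ e => e))
      (coeff ν q)

namespace Apolar

/-- product of descending factorials -/
def dsc {σ : Type*} [DecidableEq σ] (ν μ : σ →₀ ℕ) : ℕ :=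
  ∏ i ∈ μ.support, (ν i).descFactorial (μ i)

variable {K : Type*} [CommSemiring K] {σ : Type*} [DecidableEq σ]

lemma dsc_fintype [Fintype σ] (ν μ : σ →₀ ℕ) :
    dsc ν μ = ∏ i : σ, (ν i).descFactorial (μ i) := by
  rw [dsc]
  apply Finset.prod_subset (Finset.subset_univ _)
  intro i _ hi
  rw [Finsupp.notMem_support_iff.mp hi, Nat.descFactorial_zero]

lemma dsc_zero (ν : σ →₀ ℕ) : dsc ν 0 = 1 := by simp [dsc]

lemma descFac_split (a b b' : ℕ) :
    (a + b + b').descFactorial (b + b') =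
      (a + b + b').descFactorial b' * (a + b).descFactorial b := by
  have ha : 0 < a.factorial := Nat.factorial_pos a
  apply Nat.eq_of_mul_eq_mul_left ha
  have h1 : a.factorial * ((a + b + b').descFactorial (b + b')) = (a + b + b').factorial := by
    have := Nat.factorial_mul_descFactorial (n := a + b + b') (k := b + b') (by omega)
    rwa [show a + b + b' - (b + b') = a by omega] at this
  have h2 : a.factorial * ((a + b).descFactorial b) = (a + b).factorial := by
    have := Nat.factorial_mul_descFactorial (n := a + b) (k := b) (by omega)
    rwa [show a + b - b = a by omega] at this
  have h3 : (a + b).factorial * ((a + b + b').descFactorial b') = (a + b + b').factorial := by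
    have := Nat.factorial_mul_descFactorial (n := a + b + b') (k := b') (by omega)
    rwa [show a + b + b' - b' = a + b by omega] at this
  calc a.factorial * ((a + b + b').descFactorial (b + b')) = (a + b + b').factorial := h1
    _ = (a + b).factorial * ((a + b + b').descFactorial b') := h3.symm
    _ = a.factorial * ((a + b).descFactorial b) * ((a + b + b').descFactorial b') := by rw [h2]
    _ = a.factorial * ((a + b + b').descFactorial b' * (a + b).descFactorial b) := by ring

lemma dsc_split [Fintype σ] (τ μ μ' : σ →₀ ℕ) :
    dsc (τ + μ + μ') (μ + μ') = dsc (τ + μ + μ') μ' * dsc (τ + μ) μ := by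
  rw [dsc_fintype, dsc_fintype, dsc_fintype, ← Finset.prod_mul_distrib]
  exact Finset.prod_congr rfl fun i _ => by
    simp only [Finsupp.add_apply]
    exact descFac_split (τ i) (μ i) (μ' i)

lemma coeff_diffOp (g p : MvPolynomial σ K) (τ : σ →₀ ℕ) :
    coeff τ (diffOp g p) =
      ∑ μ ∈ g.support, coeff μ g * coeff (τ + μ) p * (dsc (τ + μ) μ : K) := by
  rw [diffOp, coeff_sum]
  refine Finset.sum_congr rfl fun μ _ => ?_
  rw [coeff_sum]
  have key : ∀ ν ∈ p.support, ν ≠ τ + μ →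
      coeff τ (if μ ≤ ν then monomial (ν - μ)
        (coeff μ g * coeff ν p * ((∏ i ∈ μ.support, (ν i).descFactorial (μ i) : ℕ) : K))
        else 0) = 0 := by
    intro ν _ hne
    split_ifs with hle
    · rw [coeff_monomial, if_neg]
      intro he
      apply hne
      ext i
      have h1 : ν i - μ i = τ i := by
        rw [← Finsupp.tsub_apply, he]
      have h2 : μ i ≤ ν i := hle i
      simp only [Finsupp.add_apply]
      omega
    · exact coeff_zero _
  by_cases hmem : τ + μ ∈ p.support
  · rw [Finset.sum_eq_single (τ + μ) key (fun h => (h hmem).elim)]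
    rw [if_pos le_add_self, coeff_monomial, if_pos (by rw [add_tsub_cancel_right]), dsc]
  · rw [Finset.sum_eq_zero, MvPolynomial.notMem_support_iff.mp hmem]
    · ring
    · intro ν hν
      exact key ν hν (fun h => hmem (h ▸ hν))

lemma coeff_diffOp' (g p : MvPolynomial σ K) {s : Finset (σ →₀ ℕ)} (hs : g.support ⊆ s)
    (τ : σ →₀ ℕ) :
    coeff τ (diffOp g p) =
      ∑ μ ∈ s, coeff μ g * coeff (τ + μ) p * (dsc (τ + μ) μ : K) := by
  rw [coeff_diffOp]
  apply Finset.sum_subset hs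
  intro μ _ hμ
  rw [MvPolynomial.notMem_support_iff.mp hμ]
  ring

lemma diffOp_zero_left (p : MvPolynomial σ K) : diffOp 0 p = 0 := by simp [diffOp]

lemma diffOp_zero_right (g : MvPolynomial σ K) : diffOp g 0 = 0 := by simp [diffOp]

lemma diffOp_add_left (g h p : MvPolynomial σ K) :
    diffOp (g + h) p = diffOp g p + diffOp h p := by
  ext τ
  rw [MvPolynomial.coeff_add, coeff_diffOp' (g + h) p (MvPolynomial.support_add),
    coeff_diffOp' g p (Finset.subset_union_left),
    coeff_diffOp' h p (Finset.subset_union_right), ← Finset.sum_add_distrib]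
  exact Finset.sum_congr rfl fun μ _ => by rw [MvPolynomial.coeff_add]; ring

lemma diffOp_smul_left (c : K) (g p : MvPolynomial σ K) :
    diffOp (c • g) p = c • diffOp g p := by
  ext τ
  rw [MvPolynomial.coeff_smul, coeff_diffOp' (c • g) p (Finsupp.support_smul),
    coeff_diffOp, Finset.smul_sum]
  exact Finset.sum_congr rfl fun μ _ => by
    rw [MvPolynomial.coeff_smul, smul_eq_mul, smul_eq_mul]; ring

lemma diffOp_add_right (g p q : MvPolynomial σ K) :
    diffOp g (p + q) = diffOp g p + diffOp g q := by
  ext τ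
  rw [MvPolynomial.coeff_add, coeff_diffOp, coeff_diffOp, coeff_diffOp,
    ← Finset.sum_add_distrib]
  exact Finset.sum_congr rfl fun μ _ => by rw [MvPolynomial.coeff_add]; ring

lemma diffOp_sum_left {ι : Type*} (s : Finset ι) (G : ι → MvPolynomial σ K)
    (p : MvPolynomial σ K) :
    diffOp (∑ i ∈ s, G i) p = ∑ i ∈ s, diffOp (G i) p := by
  classical
  induction s using Finset.induction_on with
  | empty => simp [diffOp_zero_left]
  | insert _ _ hi ih => rw [Finset.sum_insert hi, Finset.sum_insert hi, diffOp_add_left, ih]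

lemma coeff_diffOp_monomial (μ : σ →₀ ℕ) (c : K) (p : MvPolynomial σ K) (τ : σ →₀ ℕ) :
    coeff τ (diffOp (monomial μ c) p) = c * coeff (τ + μ) p * (dsc (τ + μ) μ : K) := by
  rw [coeff_diffOp' _ p (MvPolynomial.support_monomial_subset) τ, Finset.sum_singleton,
    MvPolynomial.coeff_monomial, if_pos rfl]

lemma diffOp_one (p : MvPolynomial σ K) : diffOp 1 p = p := by
  ext τ
  have h1 : (1 : MvPolynomial σ K) = monomial 0 1 := by
    rw [MvPolynomial.monomial_zero', MvPolynomial.C_1]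
  rw [h1, coeff_diffOp_monomial, dsc_zero, add_zero]
  push_cast
  ring

lemma diffOp_mul [Fintype σ] (g h p : MvPolynomial σ K) :
    diffOp (g * h) p = diffOp g (diffOp h p) := by
  induction g using MvPolynomial.induction_on' with
  | add g1 g2 ih1 ih2 => rw [add_mul, diffOp_add_left, ih1, ih2, diffOp_add_left]
  | monomial μ c =>
    induction h using MvPolynomial.induction_on' with
    | add h1 h2' ih1 ih2 =>
      rw [mul_add, diffOp_add_left, ih1, ih2, diffOp_add_left, diffOp_add_right]
    | monomial μ' c' =>
      ext τ
      rw [MvPolynomial.monomial_mul, coeff_diffOp_monomial, coeff_diffOp_monomial,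
        coeff_diffOp_monomial]
      rw [← add_assoc τ μ μ', dsc_split]
      push_cast
      ring

end Apolar

namespace Apolar

variable {K : Type*} [CommSemiring K] {σ : Type*} [DecidableEq σ]

lemma diffOp_high [Fintype σ] (g p : MvPolynomial σ K)
    (h : ∀ μ ∈ g.support, p.totalDegree < μ.sum fun _ e => e) : diffOp g p = 0 := by
  rw [diffOp]
  apply Finset.sum_eq_zero
  intro μ hμ
  apply Finset.sum_eq_zero
  intro ν hν
  rw [if_neg]
  intro hle
  have h1 : (μ.sum fun _ e => e) ≤ ν.sum fun _ e => e := by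
    rw [Finsupp.sum_fintype _ _ (fun _ => rfl), Finsupp.sum_fintype _ _ (fun _ => rfl)]
    exact Finset.sum_le_sum fun i _ => hle i
  have h2 := MvPolynomial.le_totalDegree hν
  have h3 := h μ hμ
  omega

section Emb

variable {α : Type*} [DecidableEq α]

/-- embed a finsupp on `α` into one on `Option α`, with value `a` at `none`. -/
noncomputable def emb (ν : α →₀ ℕ) (a : ℕ) : Option α →₀ ℕ :=
  Finsupp.mapDomain Option.some ν + Finsupp.single none a

@[simp] lemma emb_some_apply (ν : α →₀ ℕ) (a : ℕ) (x : α) : emb ν a (Option.some x) = ν x := by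
  rw [emb, Finsupp.add_apply, Finsupp.mapDomain_apply (Option.some_injective α),
    Finsupp.single_apply, if_neg (by simp), add_zero]

@[simp] lemma emb_none_apply (ν : α →₀ ℕ) (a : ℕ) : emb ν a none = a := by
  rw [emb, Finsupp.add_apply, Finsupp.mapDomain_notin_range _ _ (by simp),
    Finsupp.single_apply, if_pos rfl, zero_add]

@[simp] lemma some_emb (ν : α →₀ ℕ) (a : ℕ) : (emb ν a).some = ν := by
  ext x; rw [Finsupp.some_apply, emb_some_apply]

lemma emb_decomp (τ : Option α →₀ ℕ) : emb τ.some (τ none) = τ := by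
  ext (_ | x)
  · rw [emb_none_apply]
  · rw [emb_some_apply, Finsupp.some_apply]

lemma emb_add (ν μ : α →₀ ℕ) (a b : ℕ) : emb ν a + emb μ b = emb (ν + μ) (a + b) := by
  ext (_ | x) <;> simp

lemma emb_sum [Fintype α] (ν : α →₀ ℕ) (a : ℕ) :
    ((emb ν a).sum fun _ e => e) = (ν.sum fun _ e => e) + a := by
  rw [Finsupp.sum_fintype _ _ (fun _ => rfl), Finsupp.sum_fintype _ _ (fun _ => rfl),
    Fintype.sum_option]
  simp [add_comm]

lemma sum_add_eq [Fintype α] (ν μ : α →₀ ℕ) :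
    ((ν + μ).sum fun _ e => e) = (ν.sum fun _ e => e) + (μ.sum fun _ e => e) := by
  rw [Finsupp.sum_fintype _ _ (fun _ => rfl), Finsupp.sum_fintype _ _ (fun _ => rfl),
    Finsupp.sum_fintype _ _ (fun _ => rfl), ← Finset.sum_add_distrib]
  simp

lemma dsc_emb [Fintype α] (ν μ : α →₀ ℕ) (a b : ℕ) :
    dsc (emb ν a) (emb μ b) = a.descFactorial b * dsc ν μ := by
  rw [dsc_fintype, dsc_fintype, Fintype.prod_option]
  simp

end Emb

section Dehom

variable {α : Type*} [DecidableEq α] [Fintype α]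

/-- the weighted dehomogenization of `F`. -/
noncomputable def dehom (F : MvPolynomial (Option α) K) : MvPolynomial α K :=
  ∑ ν ∈ F.support, MvPolynomial.monomial ν.some (((ν none).factorial : K) * MvPolynomial.coeff ν F)

lemma coeff_dehom {F : MvPolynomial (Option α) K} {d : ℕ}
    (hF : ∀ ν ∈ F.support, (ν.sum fun _ e => e) = d) (ν : α →₀ ℕ) :
    MvPolynomial.coeff ν (dehom F) =
      (((d - ν.sum fun _ e => e).factorial : K)) *
        MvPolynomial.coeff (emb ν (d - ν.sum fun _ e => e)) F := by
  classical
  rw [dehom, MvPolynomial.coeff_sum]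
  have hchar : ∀ τ ∈ F.support, τ.some = ν → τ = emb ν (d - ν.sum fun _ e => e) := by
    intro τ hτ hsome
    have h1 : ((τ.some).sum fun _ e => e) + τ none = d := by
      rw [← hF τ hτ, ← emb_sum, emb_decomp]
    rw [← emb_decomp τ, hsome]
    congr 1
    rw [hsome] at h1
    omega
  by_cases hmem : emb ν (d - ν.sum fun _ e => e) ∈ F.support
  · rw [Finset.sum_eq_single (emb ν (d - ν.sum fun _ e => e))]
    · rw [MvPolynomial.coeff_monomial, if_pos (some_emb _ _), emb_none_apply]
    · intro τ hτ hne
      rw [MvPolynomial.coeff_monomial, if_neg]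
      intro hsome
      exact hne (hchar τ hτ hsome)
    · intro h; exact (h hmem).elim
  · rw [Finset.sum_eq_zero, MvPolynomial.notMem_support_iff.mp hmem, mul_zero]
    intro τ hτ
    rw [MvPolynomial.coeff_monomial, if_neg]
    intro hsome
    exact hmem (hchar τ hτ hsome ▸ hτ)

end Dehom

section KeyHomog

variable {K' : Type*} [Field K'] [CharZero K'] {α : Type*} [DecidableEq α] [Fintype α]

lemma key_homog {F : MvPolynomial (Option α) K'} {d : ℕ}
    (hF : ∀ ν ∈ F.support, (ν.sum fun _ e => e) = d) (p : MvPolynomial α K')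
    (hp : diffOp p (dehom F) = 0) :
    diffOp (∑ μ ∈ p.support,
      MvPolynomial.monomial (emb μ (p.totalDegree - μ.sum fun _ e => e))
        (MvPolynomial.coeff μ p)) F = 0 := by
  classical
  set e := p.totalDegree with he
  ext τ'
  obtain ⟨τ, a, rfl⟩ : ∃ τ a, τ' = emb τ a := ⟨_, _, (emb_decomp τ').symm⟩
  rw [MvPolynomial.coeff_zero, diffOp_sum_left, MvPolynomial.coeff_sum]
  have hterm : ∀ μ ∈ p.support,
      MvPolynomial.coeff (emb τ a)
        (diffOp (MvPolynomial.monomial (emb μ (e - μ.sum fun _ e => e))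
          (MvPolynomial.coeff μ p)) F) =
      MvPolynomial.coeff μ p *
        MvPolynomial.coeff (emb (τ + μ) (a + (e - μ.sum fun _ e => e))) F *
        (((a + (e - μ.sum fun _ e => e)).descFactorial (e - μ.sum fun _ e => e) *
          dsc (τ + μ) μ : ℕ) : K') := by
    intro μ hμ
    rw [coeff_diffOp_monomial, emb_add, dsc_emb]
  by_cases hcase : a + e + (τ.sum fun _ e => e) = d
  · -- relate to a coefficient of `diffOp p (dehom F)`
    have hmain : ((a.factorial : K')) * ∑ μ ∈ p.support,
        MvPolynomial.coeff (emb τ a)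
          (diffOp (MvPolynomial.monomial (emb μ (e - μ.sum fun _ e => e))
            (MvPolynomial.coeff μ p)) F) =
        MvPolynomial.coeff τ (diffOp p (dehom F)) := by
      rw [coeff_diffOp, Finset.mul_sum]
      refine Finset.sum_congr rfl fun μ hμ => ?_
      rw [hterm μ hμ, coeff_dehom hF]
      have hμe : (μ.sum fun _ e => e) ≤ e := MvPolynomial.le_totalDegree hμ
      have h1 : d - ((τ + μ).sum fun _ e => e) = a + (e - μ.sum fun _ e => e) := by
        rw [sum_add_eq]; omega
      have h2 : a.factorial * ((a + (e - μ.sum fun _ e => e)).descFactorial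
          (e - μ.sum fun _ e => e)) = (a + (e - μ.sum fun _ e => e)).factorial := by
        have := Nat.factorial_mul_descFactorial
          (n := a + (e - μ.sum fun _ e => e)) (k := (e - μ.sum fun _ e => e)) (by omega)
        rwa [show a + (e - μ.sum fun _ e => e) - (e - μ.sum fun _ e => e) = a by omega] at this
      rw [h1, ← h2]
      push_cast
      ring
    have ha : ((a.factorial : K')) ≠ 0 := by
      exact_mod_cast Nat.cast_ne_zero.mpr a.factorial_ne_zero
    rw [hp, MvPolynomial.coeff_zero] at hmain
    exact (mul_eq_zero.mp hmain).resolve_left ha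
  · -- every term vanishes for degree reasons
    apply Finset.sum_eq_zero
    intro μ hμ
    rw [hterm μ hμ]
    have hμe : (μ.sum fun _ e => e) ≤ e := MvPolynomial.le_totalDegree hμ
    have hzero : MvPolynomial.coeff (emb (τ + μ) (a + (e - μ.sum fun _ e => e))) F = 0 := by
      rw [← MvPolynomial.notMem_support_iff]
      intro hmem
      have := hF _ hmem
      rw [emb_sum, sum_add_eq] at this
      omega
    rw [hzero]
    ring


end KeyHomog


end Apolar

namespace Apolar

lemma sum_some_add {α : Type*} [DecidableEq α] [Fintype α] (τ : Option α →₀ ℕ) :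
    ((τ.some).sum fun _ e => e) + τ none = τ.sum fun _ e => e := by
  conv_rhs => rw [← emb_decomp τ]
  rw [emb_sum]

section Count

variable (K : Type*) [Field K] (α : Type*) [DecidableEq α] [Fintype α]

/-- Stars and bars: monomials of degree `≤ m` in `α` variables correspond to
`Sym (Option α) m`. -/
noncomputable def symEquiv (m : ℕ) :
    {x : α →₀ ℕ // (x.sum fun _ e => e) ≤ m} ≃ Sym (Option α) m where
  toFun ν := ⟨Finsupp.toMultiset (emb ν.1 (m - ν.1.sum fun _ e => e)), by
    rw [Finsupp.card_toMultiset]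
    have h := emb_sum ν.1 (m - ν.1.sum fun _ e => e)
    have h2 := ν.2
    rw [show ((emb ν.1 (m - ν.1.sum fun _ e => e)).sum fun _ => id) =
      ((emb ν.1 (m - ν.1.sum fun _ e => e)).sum fun _ e => e) from rfl, h]
    omega⟩
  invFun s := ⟨(Multiset.toFinsupp (s : Multiset (Option α))).some, by
    have hc : ((Multiset.toFinsupp (s : Multiset (Option α))).sum fun _ e => e) = m := by
      rw [show ((Multiset.toFinsupp (s : Multiset (Option α))).sum fun _ e => e) =
        ((Multiset.toFinsupp (s : Multiset (Option α))).sum fun _ => id) from rfl,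
        ← Finsupp.card_toMultiset, Multiset.toFinsupp_toMultiset]
      exact s.2
    have h2 := sum_some_add (Multiset.toFinsupp (s : Multiset (Option α)))
    omega⟩
  left_inv ν := by
    apply Subtype.ext
    show (Multiset.toFinsupp (Finsupp.toMultiset _)).some = _
    rw [Finsupp.toMultiset_toFinsupp, some_emb]
  right_inv s := by
    apply Sym.coe_injective
    show Finsupp.toMultiset _ = _
    set μ := Multiset.toFinsupp (s : Multiset (Option α)) with hμ
    have hc : (μ.sum fun _ e => e) = m := by
      rw [show (μ.sum fun _ e => e) = (μ.sum fun _ => id) from rfl,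
        hμ, ← Finsupp.card_toMultiset, Multiset.toFinsupp_toMultiset]
      exact s.2
    have hd := sum_some_add μ
    have hsle : ((μ.some).sum fun _ e => e) ≤ m := by omega
    have heq : emb μ.some (m - (μ.some).sum fun _ e => e) = μ := by
      rw [show m - ((μ.some).sum fun _ e => e) = μ none by omega]
      exact emb_decomp μ
    rw [heq, hμ, Multiset.toFinsupp_toMultiset]

lemma finrank_restrictTotalDegree (m : ℕ) :
    Module.finrank K (MvPolynomial.restrictTotalDegree α K m) =
      (Fintype.card α + m).choose m := by
  classical
  have e1 : {x : α →₀ ℕ // x ∈ {n : α →₀ ℕ | (n.sum fun _ e => e) ≤ m}} ≃ Sym (Option α) m :=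
    symEquiv α m
  haveI : Fintype {x : α →₀ ℕ // x ∈ {n : α →₀ ℕ | (n.sum fun _ e => e) ≤ m}} :=
    Fintype.ofEquiv _ e1.symm
  rw [MvPolynomial.restrictTotalDegree, Module.finrank_eq_card_basis
    (MvPolynomial.basisRestrictSupport K {n : α →₀ ℕ | (n.sum fun _ e => e) ≤ m}),
    Fintype.card_congr e1, Sym.card_sym_eq_choose, Fintype.card_option]
  congr 1
  omega

end Count

end Apolar

namespace Apolar

section Subst

variable {K : Type*} [CommSemiring K] {s : ℕ} {n : Fin s → ℕ}

/-- The variable substitution map underlying `subst`. -/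
def xi (s : ℕ) (n : Fin s → ℕ) : RVar s n → SVar s n := fun v =>
  if h : (v.2 : ℕ) = 0 then none
  else some ⟨v.1, ⟨(v.2 : ℕ) - 1, by have := v.2.isLt; omega⟩⟩

lemma xi_succ {j : Fin s} (i : Fin (n j)) : xi s n ⟨j, i.succ⟩ = some ⟨j, i⟩ := by
  rw [xi, dif_neg (by simp)]
  exact congrArg some (congrArg (Sigma.mk j) (Fin.ext (by simp)))

lemma xi_eq_some {v : RVar s n} {j : Fin s} {i : Fin (n j)} (h : xi s n v = some ⟨j, i⟩) :
    v = ⟨j, i.succ⟩ := by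
  obtain ⟨j', i'⟩ := v
  by_cases h0 : (i' : ℕ) = 0
  · rw [xi, dif_pos h0] at h
    exact absurd h (by simp)
  · rw [xi, dif_neg h0] at h
    obtain ⟨h1, h2⟩ := Sigma.mk.inj_iff.mp (Option.some.inj h)
    subst h1
    have h4 : (i' : ℕ) - 1 = (i : ℕ) := congrArg Fin.val (eq_of_heq h2)
    exact congrArg (Sigma.mk j') (Fin.ext (by simp [Fin.val_succ]; omega))

lemma subst_X (v : RVar s n) : subst K s n (X v) = X (xi s n v) := by
  rw [subst, aeval_X, xi]
  split_ifs <;> rfl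

lemma subst_eq_rename :
    (subst K s n : MvPolynomial (RVar s n) K →ₐ[K] MvPolynomial (SVar s n) K) =
      rename (xi s n) := by
  apply MvPolynomial.algHom_ext
  intro v
  rw [subst_X, rename_X]

lemma subst_apply_monomial (m : RVar s n →₀ ℕ) (c : K) :
    subst K s n (monomial m c) = monomial (Finsupp.mapDomain (xi s n) m) c := by
  rw [subst_eq_rename, rename_monomial]

lemma mapDomain_xi_some (m : RVar s n →₀ ℕ) {j : Fin s} (i : Fin (n j)) :
    Finsupp.mapDomain (xi s n) m (some ⟨j, i⟩) = m ⟨j, i.succ⟩ := by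
  classical
  rw [Finsupp.mapDomain, Finsupp.sum_apply,
    Finsupp.sum_fintype _ _ (fun v => by simp)]
  rw [Finset.sum_eq_single (⟨j, i.succ⟩ : RVar s n)]
  · rw [xi_succ, Finsupp.single_apply, if_pos rfl]
  · intro v _ hne
    rw [Finsupp.single_apply, if_neg]
    intro h
    exact hne (xi_eq_some h)
  · intro h
    exact absurd (Finset.mem_univ _) h

lemma mapDomain_xi_sum (m : RVar s n →₀ ℕ) :
    ((Finsupp.mapDomain (xi s n) m).sum fun _ e => e) = m.sum fun _ e => e :=
  Finsupp.sum_mapDomain_index (fun _ => rfl) (fun _ _ _ => rfl)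

lemma sum_eq_multidegree {d : Fin s → ℕ} {f : MvPolynomial (RVar s n) K}
    (hf : MultiHomog d f) {m : RVar s n →₀ ℕ} (hm : m ∈ f.support) :
    (m.sum fun _ e => e) = ∑ j, d j := by
  rw [Finsupp.sum_fintype _ _ (fun _ => rfl), ← Finset.univ_sigma_univ, Finset.sum_sigma]
  exact Finset.sum_congr rfl fun j _ => hf m hm j

lemma mapDomain_xi_inj {d : Fin s → ℕ} {f : MvPolynomial (RVar s n) K}
    (hf : MultiHomog d f) {m m' : RVar s n →₀ ℕ} (hm : m ∈ f.support) (hm' : m' ∈ f.support)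
    (h : Finsupp.mapDomain (xi s n) m = Finsupp.mapDomain (xi s n) m') : m = m' := by
  have hsome : ∀ (j : Fin s) (i : Fin (n j)), m ⟨j, i.succ⟩ = m' ⟨j, i.succ⟩ := by
    intro j i
    rw [← mapDomain_xi_some m i, ← mapDomain_xi_some m' i, h]
  ext ⟨j, i⟩
  refine Fin.cases ?_ (fun i' => hsome j i') i
  have h1 := hf m hm j
  have h2 := hf m' hm' j
  rw [Fin.sum_univ_succ] at h1 h2
  have h3 : ∑ i' : Fin (n j), m ⟨j, i'.succ⟩ = ∑ i' : Fin (n j), m' ⟨j, i'.succ⟩ :=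
    Finset.sum_congr rfl fun i' _ => hsome j i'
  omega

lemma subst_rep (f : MvPolynomial (RVar s n) K) :
    subst K s n f = ∑ m ∈ f.support, monomial (Finsupp.mapDomain (xi s n) m) (coeff m f) := by
  conv_lhs => rw [f.as_sum, map_sum]
  exact Finset.sum_congr rfl fun m _ => subst_apply_monomial m (coeff m f)

lemma subst_support {f : MvPolynomial (RVar s n) K} {ν : SVar s n →₀ ℕ}
    (hν : ν ∈ (subst K s n f).support) :
    ∃ m ∈ f.support, ν = Finsupp.mapDomain (xi s n) m := by
  classical
  rw [subst_rep] at hν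
  have := MvPolynomial.support_sum hν
  rw [Finset.mem_biUnion] at this
  obtain ⟨m, hm, hmem⟩ := this
  exact ⟨m, hm, by
    have := MvPolynomial.support_monomial_subset hmem
    rwa [Finset.mem_singleton] at this⟩

lemma subst_homog {d : Fin s → ℕ} {f : MvPolynomial (RVar s n) K} (hf : MultiHomog d f) :
    ∀ ν ∈ (subst K s n f).support, (ν.sum fun _ e => e) = ∑ j, d j := by
  intro ν hν
  obtain ⟨m, hm, rfl⟩ := subst_support hν
  rw [mapDomain_xi_sum]
  exact sum_eq_multidegree hf hm

lemma subst_ne_zero {d : Fin s → ℕ} {f : MvPolynomial (RVar s n) K} (hf : MultiHomog d f)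
    (hf0 : f ≠ 0) : subst K s n f ≠ 0 := by
  classical
  obtain ⟨m₀, hm₀⟩ := (MvPolynomial.support_nonempty).mpr hf0
  intro h0
  have hc : coeff (Finsupp.mapDomain (xi s n) m₀) (subst K s n f) = coeff m₀ f := by
    rw [subst_rep, MvPolynomial.coeff_sum]
    rw [Finset.sum_eq_single m₀]
    · rw [MvPolynomial.coeff_monomial, if_pos rfl]
    · intro m hm hne
      rw [MvPolynomial.coeff_monomial, if_neg]
      intro h
      exact hne (mapDomain_xi_inj hf hm hm₀ h)
    · intro h
      exact absurd hm₀ h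
  rw [h0, MvPolynomial.coeff_zero] at hc
  exact (MvPolynomial.mem_support_iff.mp hm₀) hc.symm

end Subst

end Apolar

namespace Apolar

section Final

variable {K : Type*} [Field K] [CharZero K] {σ : Type*} [DecidableEq σ] [Fintype σ]

lemma pow_support_ge (y : MvPolynomial σ K) (hy : coeff 0 y = 0) (N : ℕ) :
    ∀ μ ∈ (y ^ N).support, N ≤ μ.sum fun _ e => e := by
  induction N with
  | zero => intro μ _; exact Nat.zero_le _
  | succ N ih =>
    intro μ hμ
    rw [pow_succ'] at hμ
    have hmem := MvPolynomial.support_mul _ _ hμ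
    rw [Finset.mem_add] at hmem
    obtain ⟨μ1, hμ1, μ2, hμ2, rfl⟩ := hmem
    have h1 : 1 ≤ μ1.sum fun _ e => e := by
      have hne : μ1 ≠ 0 := by
        intro h0
        rw [MvPolynomial.mem_support_iff, h0] at hμ1
        exact hμ1 hy
      obtain ⟨i, hi⟩ := Finsupp.ne_iff.mp hne
      rw [Finsupp.coe_zero, Pi.zero_apply] at hi
      calc 1 ≤ μ1 i := by omega
        _ ≤ μ1.sum fun _ e => e := by
          rw [Finsupp.sum_fintype _ _ (fun _ => rfl)]
          exact Finset.single_le_sum (fun _ _ => Nat.zero_le _) (Finset.mem_univ i)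
    have h2 := ih μ2 hμ2
    rw [sum_add_eq]
    omega

lemma dehom_totalDegree {F : MvPolynomial (Option σ) K} {d : ℕ}
    (hF : ∀ ν ∈ F.support, (ν.sum fun _ e => e) = d) :
    (dehom F).totalDegree ≤ d := by
  rw [MvPolynomial.totalDegree]
  apply Finset.sup_le
  intro ν hν
  rw [dehom] at hν
  have := MvPolynomial.support_sum hν
  rw [Finset.mem_biUnion] at this
  obtain ⟨τ, hτ, hmem⟩ := this
  have hsing := MvPolynomial.support_monomial_subset hmem
  rw [Finset.mem_singleton] at hsing
  subst hsing
  have h1 := sum_some_add τ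
  have h2 := hF τ hτ
  omega

lemma dehom_ne_zero {F : MvPolynomial (Option σ) K} {d : ℕ}
    (hF : ∀ ν ∈ F.support, (ν.sum fun _ e => e) = d) (hF0 : F ≠ 0) : dehom F ≠ 0 := by
  obtain ⟨τ, hτ⟩ := MvPolynomial.support_nonempty.mpr hF0
  intro h0
  have h1 := sum_some_add τ
  have h2 := hF τ hτ
  have h3 : coeff τ.some (dehom F) = 0 := by rw [h0, MvPolynomial.coeff_zero]
  rw [coeff_dehom hF, show d - (τ.some.sum fun _ e => e) = τ none by omega,
    emb_decomp τ] at h3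
  rcases mul_eq_zero.mp h3 with h4 | h4
  · exact (Nat.cast_ne_zero.mpr (τ none).factorial_ne_zero) h4
  · exact MvPolynomial.mem_support_iff.mp hτ h4

end Final

end Apolar


set_option maxHeartbeats 2000000 in
/-- **punctual apolar scheme in the affine chart.** With
`N_d = C(n+k,k) + C(n+k+1,k+1)` if `d = 2k+2` and `N_d = 2·C(n+k,k)` if `d = 2k+1`
(`n = ∑ nⱼ`, `d = ∑ dⱼ`): for every nonzero multihomogeneous `f ∈ R_𝐝` there is an ideal
`J` of `K[z_{i,j}]` whose quotient is a local finite-dimensional `K`-algebra of dimension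
at most `N_d`, and whose homogenization w.r.t. `z_0` is contained in the apolar ideal
`(u f)^⊥`; i.e. `u f` admits an apolar punctual scheme of length `≤ N_d` contained in the
affine chart `{z_0 ≠ 0}` of `ℙⁿ`. -/
theorem stmt10 (K : Type*) [Field K] [IsAlgClosed K] [CharZero K]
    (s : ℕ) (hs : 0 < s) (n : Fin s → ℕ) (hn : ∀ j, 0 < n j) (d : Fin s → ℕ)
    (k Nd : ℕ)
    (hNd : (∑ j, d j = 2 * k + 2 ∧
              Nd = Nat.choose ((∑ j, n j) + k) k + Nat.choose ((∑ j, n j) + k + 1) (k + 1)) ∨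
           (∑ j, d j = 2 * k + 1 ∧ Nd = 2 * Nat.choose ((∑ j, n j) + k) k))
    (f : MvPolynomial (RVar s n) K) (hf : MultiHomog d f) (hf0 : f ≠ 0) :
    ∃ J : Ideal (MvPolynomial (Σ j : Fin s, Fin (n j)) K),
      IsLocalRing (MvPolynomial (Σ j : Fin s, Fin (n j)) K ⧸ J) ∧
      FiniteDimensional K (MvPolynomial (Σ j : Fin s, Fin (n j)) K ⧸ J) ∧
      Module.finrank K (MvPolynomial (Σ j : Fin s, Fin (n j)) K ⧸ J) ≤ Nd ∧
      ∀ g ∈ Ideal.span (homogenize '' (J : Set (MvPolynomial (Σ j : Fin s, Fin (n j)) K))),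
        diffOp g (subst K s n f) = 0 := by
  classical
  set D : ℕ := ∑ j, d j with hD
  set F : MvPolynomial (SVar s n) K := subst K s n f with hF
  have hFhom : ∀ ν ∈ F.support, (ν.sum fun _ e => e) = D := Apolar.subst_homog hf
  have hF0 : F ≠ 0 := Apolar.subst_ne_zero hf hf0
  set gd : MvPolynomial (Σ j : Fin s, Fin (n j)) K := Apolar.dehom F with hg
  have hg0 : gd ≠ 0 := Apolar.dehom_ne_zero hFhom hF0
  have hgdeg : gd.totalDegree ≤ D := Apolar.dehom_totalDegree hFhom
  -- the ideal
  let J : Ideal (MvPolynomial (Σ j : Fin s, Fin (n j)) K) :=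
    { carrier := {p | diffOp p gd = 0}
      add_mem' := fun {p} {q} hp hq => by
        simp only [Set.mem_setOf_eq] at *
        rw [Apolar.diffOp_add_left, hp, hq, add_zero]
      zero_mem' := Apolar.diffOp_zero_left gd
      smul_mem' := fun r p hp => by
        simp only [Set.mem_setOf_eq, smul_eq_mul] at *
        rw [Apolar.diffOp_mul, hp, Apolar.diffOp_zero_right] }
  have hmemJ : ∀ p, p ∈ J ↔ diffOp p gd = 0 := fun p => Iff.rfl
  have hJtop : J ≠ ⊤ := by
    intro htop
    apply hg0
    rw [← Apolar.diffOp_one gd]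
    exact (hmemJ 1).mp (htop ▸ Submodule.mem_top)
  haveI : Nontrivial (MvPolynomial (Σ j : Fin s, Fin (n j)) K ⧸ J) :=
    Ideal.Quotient.nontrivial_iff.mpr hJtop
  have hQfin : FiniteDimensional K (MvPolynomial (Σ j : Fin s, Fin (n j)) K ⧸ J) ∧
      Module.finrank K (MvPolynomial (Σ j : Fin s, Fin (n j)) K ⧸ J) ≤ Nd := by
    let Φ : MvPolynomial (Σ j : Fin s, Fin (n j)) K →ₗ[K]
        MvPolynomial (Σ j : Fin s, Fin (n j)) K :=
      { toFun := fun p => diffOp p gd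
        map_add' := fun p q => Apolar.diffOp_add_left p q gd
        map_smul' := fun c p => Apolar.diffOp_smul_left c p gd }
    have hker : LinearMap.ker Φ = Submodule.restrictScalars K J := by
      ext p
      rw [LinearMap.mem_ker]
      exact ⟨fun h => h, fun h => h⟩
    let e1 : (MvPolynomial (Σ j : Fin s, Fin (n j)) K ⧸ J) ≃ₗ[K] (MvPolynomial (Σ j : Fin s, Fin (n j)) K ⧸ Submodule.restrictScalars K J) :=
      (Submodule.Quotient.restrictScalarsEquiv K J).symm
    let e2 : (MvPolynomial (Σ j : Fin s, Fin (n j)) K ⧸ Submodule.restrictScalars K J) ≃ₗ[K] (MvPolynomial (Σ j : Fin s, Fin (n j)) K ⧸ LinearMap.ker Φ) :=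
      Submodule.quotEquivOfEq _ _ hker.symm
    let eqv : (MvPolynomial (Σ j : Fin s, Fin (n j)) K ⧸ J) ≃ₗ[K] LinearMap.range Φ := e1.trans (e2.trans Φ.quotKerEquivRange)
    set A : Submodule K (MvPolynomial (Σ j : Fin s, Fin (n j)) K) := Submodule.map Φ (MvPolynomial.restrictTotalDegree (Σ j : Fin s, Fin (n j)) K k) with hA
    set B : Submodule K (MvPolynomial (Σ j : Fin s, Fin (n j)) K) :=
      MvPolynomial.restrictTotalDegree (Σ j : Fin s, Fin (n j)) K (D - (k+1)) with hB
    have hrange : LinearMap.range Φ ≤ A ⊔ B := by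
      rintro y ⟨p, rfl⟩
      have hy : Φ p = ∑ μ ∈ p.support, diffOp (monomial μ (coeff μ p)) gd := by
        show diffOp p gd = _
        conv_lhs => rw [p.as_sum]
        rw [Apolar.diffOp_sum_left]
      rw [hy]
      apply Submodule.sum_mem
      intro μ hμ
      by_cases hk : (μ.sum fun _ e => e) ≤ k
      · apply Submodule.mem_sup_left
        have hmm : monomial μ (coeff μ p) ∈
            MvPolynomial.restrictTotalDegree (Σ j : Fin s, Fin (n j)) K k := by
          rw [MvPolynomial.mem_restrictTotalDegree]
          exact (MvPolynomial.totalDegree_monomial_le _ _).trans hk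
        exact Submodule.mem_map_of_mem (f := Φ) hmm
      · apply Submodule.mem_sup_right
        rw [hB, MvPolynomial.mem_restrictTotalDegree, MvPolynomial.totalDegree]
        apply Finset.sup_le
        intro τ hτ
        have hco := MvPolynomial.mem_support_iff.mp hτ
        rw [Apolar.coeff_diffOp_monomial] at hco
        have hg1 : coeff (τ + μ) gd ≠ 0 := fun h => hco (by rw [h]; ring)
        have hg2 : ((τ + μ).sum fun _ e => e) ≤ D :=
          le_trans (MvPolynomial.le_totalDegree (MvPolynomial.mem_support_iff.mpr hg1)) hgdeg
        rw [Apolar.sum_add_eq] at hg2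
        omega
    haveI hfinA : FiniteDimensional K A := Module.Finite.map _ Φ
    haveI hfinAB : FiniteDimensional K (A ⊔ B : Submodule K (MvPolynomial (Σ j : Fin s, Fin (n j)) K)) := inferInstance
    haveI hfinR : FiniteDimensional K (LinearMap.range Φ) :=
      Submodule.finiteDimensional_of_le hrange
    haveI hfinQ : FiniteDimensional K (MvPolynomial (Σ j : Fin s, Fin (n j)) K ⧸ J) := eqv.symm.finiteDimensional
    refine ⟨hfinQ, ?_⟩
    rw [eqv.finrank_eq]
    have hcard : Fintype.card (Σ j : Fin s, Fin (n j)) = ∑ j, n j := by simp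
    have h1 : Module.finrank K (LinearMap.range Φ) ≤
        Module.finrank K (A ⊔ B : Submodule K (MvPolynomial (Σ j : Fin s, Fin (n j)) K)) := Submodule.finrank_mono hrange
    have h2 := Submodule.finrank_add_le_finrank_add_finrank A B
    have h3 : Module.finrank K A ≤ ((∑ j, n j) + k).choose k := by
      refine le_trans (Submodule.finrank_map_le Φ _) ?_
      rw [Apolar.finrank_restrictTotalDegree, hcard]
    have h4 : Module.finrank K B =
        ((∑ j, n j) + (D - (k+1))).choose (D - (k+1)) := by
      rw [hB, Apolar.finrank_restrictTotalDegree, hcard]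
    rcases hNd with ⟨hDk, hNdv⟩ | ⟨hDk, hNdv⟩
    · have hD1 : D - (k+1) = k+1 := by omega
      have hD2 : (∑ j, n j) + (k+1) = (∑ j, n j) + k + 1 := by omega
      rw [hD1, hD2] at h4
      calc Module.finrank K (LinearMap.range Φ)
          ≤ Module.finrank K (A ⊔ B : Submodule K (MvPolynomial (Σ j : Fin s, Fin (n j)) K)) := h1
        _ ≤ Module.finrank K A + Module.finrank K B := h2
        _ ≤ ((∑ j, n j) + k).choose k + ((∑ j, n j) + k + 1).choose (k+1) :=
            Nat.add_le_add h3 (le_of_eq h4)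
        _ = Nd := hNdv.symm
    · have hD1 : D - (k+1) = k := by omega
      rw [hD1] at h4
      calc Module.finrank K (LinearMap.range Φ)
          ≤ Module.finrank K (A ⊔ B : Submodule K (MvPolynomial (Σ j : Fin s, Fin (n j)) K)) := h1
        _ ≤ Module.finrank K A + Module.finrank K B := h2
        _ ≤ ((∑ j, n j) + k).choose k + ((∑ j, n j) + k).choose k :=
            Nat.add_le_add h3 (le_of_eq h4)
        _ = Nd := by rw [hNdv, Nat.two_mul]
  refine ⟨J, ?_, ?_, ?_, ?_⟩
  · -- local
    apply IsLocalRing.of_isUnit_or_isUnit_one_sub_self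
    intro a
    obtain ⟨x, rfl⟩ := Ideal.Quotient.mk_surjective a
    have hnil : IsNilpotent (Ideal.Quotient.mk J (x - C (coeff 0 x))) := by
      refine ⟨D + 1, ?_⟩
      rw [← map_pow, Ideal.Quotient.eq_zero_iff_mem]
      rw [hmemJ]
      apply Apolar.diffOp_high
      intro μ hμ
      have := Apolar.pow_support_ge (x - C (coeff 0 x))
        (by rw [MvPolynomial.coeff_sub, MvPolynomial.coeff_zero_C, sub_self]) (D + 1) μ hμ
      omega
    by_cases hc : coeff 0 x = 0
    · right
      rw [hc, map_zero, sub_zero] at hnil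
      exact hnil.isUnit_one_sub
    · left
      have hu : IsUnit (Ideal.Quotient.mk J (C (coeff 0 x))) := by
        apply IsUnit.of_mul_eq_one (Ideal.Quotient.mk J (C (coeff 0 x)⁻¹))
        rw [← map_mul, ← C_mul, mul_inv_cancel₀ hc, C_1, map_one]
      have hx : Ideal.Quotient.mk J x =
          Ideal.Quotient.mk J (C (coeff 0 x)) + Ideal.Quotient.mk J (x - C (coeff 0 x)) := by
        rw [← map_add]; congr 1; ring
      rw [hx]
      exact hnil.isUnit_add_left_of_commute hu (Commute.all _ _)
  · -- finite dimensional
    exact hQfin.1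
  · exact hQfin.2
  · -- apolarity
    intro q hq
    refine Submodule.span_induction ?_ ?_ ?_ ?_ hq
    · rintro x ⟨p, hp, rfl⟩
      have hrep : homogenize p = ∑ μ ∈ p.support,
          monomial (Apolar.emb μ (p.totalDegree - μ.sum fun _ e => e)) (coeff μ p) := rfl
      rw [hrep]
      exact Apolar.key_homog hFhom p ((hmemJ p).mp hp)
    · exact Apolar.diffOp_zero_left F
    · intro x y _ _ hx hy
      rw [Apolar.diffOp_add_left, hx, hy, add_zero]
    · intro r x _ hx
      rw [smul_eq_mul, Apolar.diffOp_mul, hx, Apolar.diffOp_zero_right]
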